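/- Let X be the Cantor set with a free continuous ℤ^d-action and let N ∈ ℕ. Then there exist continuous equivariant maps x ↦ T_i(x), i = 0, 1, ..., 3^d − 1, each taking values in (r, D, E)-tilings of ℤ^d for some r, D, E ∈ ℕ with r > N√d, such that the open sets Ω_i = {x ∈ X : 0 ∈ Dom(T_i(x))} cover X. -/

import Mathlib

lemma marker_lemma {d : ℕ} {X : Type*} [TopologicalSpace X] [CompactSpace X]
    (hsep : ∀ x y : X, x ≠ y → ∃ V : Set X, IsClopen V ∧ x ∈ V ∧ y ∉ V)
    (act : X → (Fin d → ℤ) → X)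
    (hact0 : ∀ x, act x 0 = x)
    (hactadd : ∀ x m n, act (act x m) n = act x (m + n))
    (hactc : ∀ n, Continuous fun x => act x n)
    (hfree : ∀ x n, act x n = x → n = 0)
    (M : ℕ) :
    ∃ U : Set X, IsClopen U ∧
      (∀ y ∈ U, ∀ n : Fin d → ℤ, n ≠ 0 → (∀ j, |n j| ≤ (M : ℤ)) → act y n ∉ U) ∧
      (∀ y : X, ∃ n : Fin d → ℤ, (∀ j, |n j| ≤ (M : ℤ)) ∧ act y n ∈ U) := by
  classical
  set F : Finset (Fin d → ℤ) := Fintype.piFinset (fun _ => Finset.Icc (-(M : ℤ)) M) with hF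
  have hFmem : ∀ n : Fin d → ℤ, n ∈ F ↔ ∀ j, |n j| ≤ (M : ℤ) := by
    intro n
    simp [hF, Fintype.mem_piFinset, abs_le, Finset.mem_Icc]
  have hF0 : (0 : Fin d → ℤ) ∈ F := by
    rw [hFmem]; intro j; simp
  have hFneg : ∀ n ∈ F, -n ∈ F := by
    intro n hn; rw [hFmem] at *; intro j; simpa using hn j
  -- Step B: for each x a clopen M-separated neighborhood
  have stepB : ∀ x : X, ∃ U : Set X, IsClopen U ∧ x ∈ U ∧
      ∀ y ∈ U, ∀ n ∈ F, n ≠ 0 → act y n ∉ U := by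
    intro x
    have hA : ∀ n ∈ F.erase 0, ∃ A : Set X, IsClopen A ∧ x ∈ A ∧
        ∀ y ∈ A, act y n ∉ A := by
      intro n hn
      have hne : act x n ≠ x := by
        intro h
        exact (Finset.mem_erase.mp hn).1 (hfree x n h)
      obtain ⟨B, hB, hxB, hyB⟩ := hsep x (act x n) (Ne.symm hne)
      refine ⟨B ∩ (fun y => act y n) ⁻¹' Bᶜ, ?_, ⟨hxB, hyB⟩, ?_⟩
      · exact hB.inter ((hB.compl).preimage (hactc n))
      · rintro y ⟨-, hy2⟩ ⟨hz1, -⟩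
        exact hy2 hz1
    choose A hAclopen hAmem hAsep using hA
    refine ⟨⋂ n ∈ (F.erase 0).attach, A n n.2, ?_, ?_, ?_⟩
    · exact Set.Finite.isClopen_biInter (F.erase 0).attach.finite_toSet
        (fun n _ => hAclopen n n.2)
    · exact Set.mem_biInter (fun n _ => hAmem n n.2)
    · intro y hy n hn hn0 hcontra
      have hn' : n ∈ F.erase 0 := Finset.mem_erase.mpr ⟨hn0, hn⟩
      have h1 : y ∈ A n hn' := by
        have := Set.mem_iInter₂.mp hy ⟨n, hn'⟩ (Finset.mem_attach _ _)
        exact this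
      have h2 : act y n ∈ A n hn' := by
        have := Set.mem_iInter₂.mp hcontra ⟨n, hn'⟩ (Finset.mem_attach _ _)
        exact this
      exact hAsep n hn' y h1 h2
  choose Ux hUxclopen hUxmem hUxsep using stepB
  -- Step C: finite subcover
  have hcover : Set.univ ⊆ ⋃ x : X, Ux x := by
    intro y _
    exact Set.mem_iUnion.mpr ⟨y, hUxmem y⟩
  obtain ⟨t, ht⟩ := isCompact_univ.elim_finite_subcover Ux (fun x => (hUxclopen x).isOpen) hcover
  set l : List X := t.toList with hl
  set k : ℕ := l.length with hk
  set Ui : ℕ → Set X := fun j => if h : j < k then Ux (l.get ⟨j, h⟩) else ∅ with hUi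
  have hUiclopen : ∀ j, IsClopen (Ui j) := by
    intro j
    rw [hUi]
    by_cases h : j < k <;> simp [h, hUxclopen, isClopen_empty]
  have hUisep : ∀ j, ∀ y ∈ Ui j, ∀ n ∈ F, n ≠ 0 → act y n ∉ Ui j := by
    intro j y hy n hn hn0
    rw [hUi] at *
    by_cases h : j < k
    · simp only [dif_pos h] at hy ⊢
      exact hUxsep _ y hy n hn hn0
    · simp [dif_neg h] at hy
  have hUicover : ∀ y : X, ∃ j < k, y ∈ Ui j := by
    intro y
    have := ht (Set.mem_univ y)
    simp only [Set.mem_iUnion] at this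
    obtain ⟨x, hx, hyx⟩ := this
    have : x ∈ l := by rw [hl]; exact Finset.mem_toList.mpr hx
    obtain ⟨j, hj⟩ := List.get_of_mem this
    exact ⟨j.1, j.2, by rw [hUi]; dsimp only; rw [dif_pos (show (j:ℕ) < k from j.2)]; rw [show l.get ⟨j.1, j.2⟩ = x from hj]; exact hyx⟩
  -- shadow operator
  set shadow : Set X → Set X := fun T => ⋃ n ∈ F, (fun y => act y n) ⁻¹' T with hshadow
  have hshadowclopen : ∀ T, IsClopen T → IsClopen (shadow T) := by
    intro T hT
    exact Set.Finite.isClopen_biUnion F.finite_toSet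
      (fun n _ => hT.preimage (hactc n))
  have hshadowmem : ∀ T y, y ∈ shadow T ↔ ∃ n ∈ F, act y n ∈ T := by
    intro T y; simp [hshadow]
  -- Step D: recursion
  set Q : ℕ → Set X := fun j => Nat.rec ∅ (fun j' Qj => Qj ∪ shadow (Ui j' \ Qj)) j with hQ
  set V : ℕ → Set X := fun j => Ui j \ Q j with hV
  have hQsucc : ∀ j, Q (j + 1) = Q j ∪ shadow (V j) := fun j => rfl
  have hQclopen : ∀ j, IsClopen (Q j) := by
    intro j
    induction j with
    | zero => exact isClopen_empty
    | succ j ih =>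
      rw [hQsucc]
      exact ih.union (hshadowclopen _ ((hUiclopen j).diff ih))
  have hVclopen : ∀ j, IsClopen (V j) := fun j => (hUiclopen j).diff (hQclopen j)
  have hQmono : ∀ i j, i ≤ j → Q i ⊆ Q j := by
    intro i j hij
    induction j with
    | zero => simp_all
    | succ j ih =>
      rcases eq_or_lt_of_le hij with h | h
      · subst h; rfl
      · exact (ih (Nat.lt_succ_iff.mp h)).trans (by rw [hQsucc]; exact Set.subset_union_left)
  have hshadowsubQ : ∀ i j, i < j → shadow (V i) ⊆ Q j := by
    intro i j hij
    have h1 : shadow (V i) ⊆ Q (i + 1) := by rw [hQsucc]; exact Set.subset_union_right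
    exact h1.trans (hQmono _ _ hij)
  have hQelem : ∀ j y, y ∈ Q j → ∃ i < j, ∃ n ∈ F, act y n ∈ V i := by
    intro j
    induction j with
    | zero => intro y hy; simp [hQ] at hy
    | succ j ih =>
      intro y hy
      rw [hQsucc] at hy
      rcases hy with hy | hy
      · obtain ⟨i, hi, hn⟩ := ih y hy
        exact ⟨i, Nat.lt_succ_of_lt hi, hn⟩
      · rw [hshadowmem] at hy
        obtain ⟨n, hn, hyn⟩ := hy
        exact ⟨j, Nat.lt_succ_self j, n, hn, hyn⟩
  set U : Set X := ⋃ j ∈ Finset.range k, V j with hU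
  have hUclopen : IsClopen U :=
    Set.Finite.isClopen_biUnion (Finset.range k).finite_toSet (fun j _ => hVclopen j)
  have hUmem : ∀ y, y ∈ U ↔ ∃ j < k, y ∈ V j := by intro y; simp [hU]
  refine ⟨U, hUclopen, ?_, ?_⟩
  · -- separation
    intro y hy n hn0 hnbd hcon
    have hn : n ∈ F := (hFmem n).mpr hnbd
    obtain ⟨j, hj, hyV⟩ := (hUmem y).mp hy
    obtain ⟨i, hi, hzV⟩ := (hUmem _).mp hcon
    rcases lt_trichotomy i j with h | h | h
    · -- i < j : y ∈ shadow (V i) ⊆ Q j, contradiction with y ∈ V j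
      have : y ∈ shadow (V i) := (hshadowmem _ _).mpr ⟨n, hn, hzV⟩
      exact hyV.2 (hshadowsubQ i j h this)
    · subst h
      exact hUisep i y hyV.1 n hn hn0 hzV.1
    · -- j < i : act y n ∈ shadow (V j) ⊆ Q i
      have hback : act (act y n) (-n) = y := by
        rw [hactadd]; simp [hact0]
      have : act y n ∈ shadow (V j) := by
        rw [hshadowmem]
        exact ⟨-n, hFneg n hn, by rw [hback]; exact hyV⟩
      exact hzV.2 (hshadowsubQ j i h this)
  · -- syndeticity
    intro y
    obtain ⟨j, hj, hyU⟩ := hUicover y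
    by_cases hyV : y ∈ V j
    · exact ⟨0, fun j' => by simp, by rw [hact0]; exact (hUmem y).mpr ⟨j, hj, hyV⟩⟩
    · have hyQ : y ∈ Q j := by
        by_contra h
        exact hyV ⟨hyU, h⟩
      obtain ⟨i, hi, n, hn, hyn⟩ := hQelem j y hyQ
      exact ⟨n, (hFmem n).mp hn, (hUmem _).mpr ⟨i, hi.trans hj, hyn⟩⟩

/-- for a free continuous `ℤ^d`-action on the Cantor set `X` and any
`N ∈ ℕ`, there exist continuous equivariant maps `x ↦ T_i x`, `i = 0, ..., 3^d − 1`,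
taking values in `(r, D, E)`-tilings of `ℤ^d` for some `r, D, E ∈ ℕ` with `r > N√d`,
such that the sets `Ω_i = {x : 0 ∈ Dom (T_i x)}` cover `X`. -/
theorem stmt_13 (d N : ℕ) (X : Type*) [TopologicalSpace X]
    (hCantor : Nonempty (X ≃ₜ (ℕ → Bool)))
    (act : X → (Fin d → ℤ) → X)
    (hact0 : ∀ x, act x 0 = x)
    (hactadd : ∀ x m n, act (act x m) n = act x (m + n))
    (hactc : ∀ n, Continuous fun x => act x n)
    (hfree : ∀ x n, act x n = x → n = 0) :
    ∃ r D E : ℕ, (N : ℝ) * Real.sqrt d < (r : ℝ) ∧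
      ∃ T : Fin (3 ^ d) → X → Set (Fin d → ℤ),
        -- each T i is continuous
        (∀ i, ∀ x : X, ∀ R : ℝ, 0 < R → ∃ U : Set X, IsOpen U ∧ x ∈ U ∧ ∀ y ∈ U,
          T i y ∩ {n | Real.sqrt (∑ j, ((n j : ℝ)) ^ 2) ≤ R} =
          T i x ∩ {n | Real.sqrt (∑ j, ((n j : ℝ)) ^ 2) ≤ R}) ∧
        -- each T i is equivariant
        (∀ i, ∀ x n, T i (act x n) = {c | c + n ∈ T i x}) ∧
        -- each T i x is an (r, D, E)-tiling
        (∀ i, ∀ x : X,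
          (∀ c₁ ∈ T i x, ∀ c₂ ∈ T i x, c₁ ≠ c₂ →
            ∀ m : Fin d → ℤ, ¬ ((∀ j, |m j - c₁ j| ≤ (D : ℤ)) ∧ (∀ j, |m j - c₂ j| ≤ (D : ℤ)))) ∧
          (∀ c₁ ∈ T i x, ∀ c₂ ∈ T i x, c₁ ≠ c₂ →
            ∀ m₁ m₂ : Fin d → ℤ, (∀ j, |m₁ j - c₁ j| ≤ (D : ℤ)) →
              (∀ j, |m₂ j - c₂ j| ≤ (D : ℤ)) →
              (r : ℝ) ≤ Real.sqrt (∑ j, ((m₁ j - m₂ j : ℤ) : ℝ) ^ 2)) ∧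
          (∃ m : Fin d → ℤ, (∃ c ∈ T i x, ∀ j, |m j - c j| ≤ (D : ℤ)) ∧ ∀ j, |m j| ≤ (E : ℤ))) ∧
        -- the sets Ω_i cover X
        (⋃ i, {x | ∃ c ∈ T i x, ∀ j, |c j| ≤ (D : ℤ)}) = Set.univ := by
  classical
  obtain ⟨e⟩ := hCantor
  haveI : CompactSpace X := e.symm.compactSpace
  have hsep : ∀ x y : X, x ≠ y → ∃ V : Set X, IsClopen V ∧ x ∈ V ∧ y ∉ V := by
    intro x y hxy
    have hexy : e x ≠ e y := fun h => hxy (e.injective h)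
    obtain ⟨k, hk⟩ := Function.ne_iff.mp hexy
    refine ⟨e ⁻¹' {f | f k = e x k}, ?_, rfl, fun h => hk h.symm⟩
    exact ((isClopen_discrete {e x k}).preimage (continuous_apply k)).preimage e.continuous
  obtain ⟨r, hr1, hrN⟩ : ∃ r : ℕ, 1 ≤ r ∧ (N : ℝ) * Real.sqrt d < (r : ℝ) := by
    refine ⟨N * d + 1, Nat.le_add_left 1 _, ?_⟩
    have hsd : Real.sqrt d ≤ (d : ℝ) := by
      have hdd : d ≤ d * d := by nlinarith
      have h1 : (d : ℝ) ≤ (d : ℝ) ^ 2 := by rw [sq]; exact_mod_cast hdd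
      calc Real.sqrt d ≤ Real.sqrt ((d : ℝ) ^ 2) := Real.sqrt_le_sqrt h1
        _ = d := Real.sqrt_sq (Nat.cast_nonneg d)
    have h2 : ((N * d + 1 : ℕ) : ℝ) = (N : ℝ) * d + 1 := by push_cast; ring
    have h3 : (N : ℝ) * Real.sqrt d ≤ (N : ℝ) * d :=
      mul_le_mul_of_nonneg_left hsd (Nat.cast_nonneg N)
    rw [h2]; linarith
  obtain ⟨U, hUclopen, hUsep, hUsyn⟩ := marker_lemma hsep act hact0 hactadd hactc hfree (6 * r)
  set eps : Fin (3 ^ d) → Fin d → ℤ :=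
    fun i j => 4 * r * ((finFunctionFinEquiv.symm i j : ℤ) - 1) with heps
  set T : Fin (3 ^ d) → X → Set (Fin d → ℤ) :=
    fun i x => {c | act x (c - eps i) ∈ U} with hT
  -- key separation fact for centers
  have hsep2 : ∀ i x, ∀ c₁ ∈ T i x, ∀ c₂ ∈ T i x, c₁ ≠ c₂ →
      ∃ j, (6 * r : ℤ) + 1 ≤ |c₁ j - c₂ j| := by
    intro i x c₁ h₁ c₂ h₂ hne
    have h₂' : act (act x (c₁ - eps i)) (c₂ - c₁) ∈ U := by
      rw [hactadd]
      have : c₁ - eps i + (c₂ - c₁) = c₂ - eps i := by ring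
      rw [this]; exact h₂
    have hn0 : c₂ - c₁ ≠ 0 := sub_ne_zero.mpr (Ne.symm hne)
    by_contra hcon
    push_neg at hcon
    have hbd : ∀ j, |(c₂ - c₁) j| ≤ ((6 * r : ℕ) : ℤ) := by
      intro j
      have := hcon j
      have h' : |c₂ j - c₁ j| ≤ 6 * (r : ℤ) := by
        rw [abs_sub_comm]; omega
      simpa using h'
    exact hUsep _ h₁ (c₂ - c₁) hn0 hbd h₂'
  refine ⟨r, 2 * r, 6 * r, hrN, T, ?_, ?_, ?_, ?_⟩
  · -- continuity
    intro i x R hR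
    set K : ℕ := ⌈R⌉₊ with hK
    set G : Finset (Fin d → ℤ) := Fintype.piFinset (fun _ => Finset.Icc (-(K : ℤ)) K) with hG
    have hball : ∀ n : Fin d → ℤ, Real.sqrt (∑ j, ((n j : ℝ)) ^ 2) ≤ R → n ∈ G := by
      intro n hn
      rw [hG, Fintype.mem_piFinset]
      intro j
      rw [Finset.mem_Icc, ← abs_le]
      have h1 : ((|n j| : ℤ) : ℝ) ≤ Real.sqrt (∑ j, ((n j : ℝ)) ^ 2) := by
        push_cast
        rw [show |(n j : ℝ)| = Real.sqrt ((n j : ℝ) ^ 2) by rw [Real.sqrt_sq_eq_abs]]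
        apply Real.sqrt_le_sqrt
        exact Finset.single_le_sum (f := fun j => ((n j : ℝ)) ^ 2)
          (fun j _ => sq_nonneg _) (Finset.mem_univ j)
      have h2 : ((|n j| : ℤ) : ℝ) ≤ (K : ℝ) := le_trans (h1.trans hn) (Nat.le_ceil R)
      exact_mod_cast h2
    set W : (Fin d → ℤ) → Set X := fun c =>
      if act x (c - eps i) ∈ U then (fun y => act y (c - eps i)) ⁻¹' U
      else (fun y => act y (c - eps i)) ⁻¹' Uᶜ with hW
    have hWclopen : ∀ c, IsClopen (W c) := by
      intro c
      rw [hW]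
      by_cases h : act x (c - eps i) ∈ U <;>
        simp only [h, if_true, if_false] <;>
        [exact hUclopen.preimage (hactc _); exact hUclopen.compl.preimage (hactc _)]
    refine ⟨⋂ c ∈ G, W c, ?_, ?_, ?_⟩
    · exact (Set.Finite.isClopen_biInter G.finite_toSet (fun c _ => hWclopen c)).isOpen
    · refine Set.mem_iInter₂.mpr fun c _ => ?_
      rw [hW]
      by_cases h : act x (c - eps i) ∈ U <;> simp [h]
    · intro y hy
      ext n
      simp only [Set.mem_inter_iff, Set.mem_setOf_eq]
      constructor
      · rintro ⟨hn1, hn2⟩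
        refine ⟨?_, hn2⟩
        have hnG := hball n hn2
        have := Set.mem_iInter₂.mp hy n hnG
        rw [hW] at this
        by_cases h : act x (n - eps i) ∈ U
        · exact h
        · simp only [h, if_false, Set.mem_preimage, Set.mem_compl_iff] at this
          exact absurd hn1 this
      · rintro ⟨hn1, hn2⟩
        refine ⟨?_, hn2⟩
        have hnG := hball n hn2
        have := Set.mem_iInter₂.mp hy n hnG
        rw [hW] at this
        by_cases h : act x (n - eps i) ∈ U
        · simp only [h, if_true, Set.mem_preimage] at this; exact this
        · exact absurd hn1 h
  · -- equivariance
    intro i x n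
    ext c
    simp only [hT, Set.mem_setOf_eq, hactadd]
    have : n + (c - eps i) = c + n - eps i := by ring
    rw [this]
  · -- tiling conditions
    intro i x
    refine ⟨?_, ?_, ?_⟩
    · -- disjointness
      intro c₁ h₁ c₂ h₂ hne m ⟨hm1, hm2⟩
      obtain ⟨j, hj⟩ := hsep2 i x c₁ h₁ c₂ h₂ hne
      have := hm1 j; have := hm2 j
      have habs : |c₁ j - c₂ j| ≤ 4 * (r : ℤ) := by
        have h3 := abs_sub_abs_le_abs_sub (m j - c₂ j) (m j - c₁ j)
        have := abs_sub (m j - c₁ j) (m j - c₂ j)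
        calc |c₁ j - c₂ j| = |(m j - c₂ j) - (m j - c₁ j)| := by ring_nf
          _ ≤ |m j - c₂ j| + |m j - c₁ j| := abs_sub _ _
          _ ≤ 2 * r + 2 * r := by push_cast at hm1 hm2 ⊢; exact add_le_add (hm2 j) (hm1 j)
          _ = 4 * r := by ring
      omega
    · -- r-separation
      intro c₁ h₁ c₂ h₂ hne m₁ m₂ hm1 hm2
      obtain ⟨j, hj⟩ := hsep2 i x c₁ h₁ c₂ h₂ hne
      have hmj : (r : ℤ) ≤ |m₁ j - m₂ j| := by
        have h1 := hm1 j; have h2 := hm2 j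
        have : |c₁ j - c₂ j| ≤ |m₁ j - c₁ j| + |m₁ j - m₂ j| + |m₂ j - c₂ j| := by
          calc |c₁ j - c₂ j| = |(c₁ j - m₁ j) + (m₁ j - m₂ j) + (m₂ j - c₂ j)| := by ring_nf
            _ ≤ |(c₁ j - m₁ j) + (m₁ j - m₂ j)| + |m₂ j - c₂ j| := abs_add_le _ _
            _ ≤ |c₁ j - m₁ j| + |m₁ j - m₂ j| + |m₂ j - c₂ j| := by
                exact add_le_add_left (abs_add_le (c₁ j - m₁ j) (m₁ j - m₂ j)) _
            _ = |m₁ j - c₁ j| + |m₁ j - m₂ j| + |m₂ j - c₂ j| := by rw [abs_sub_comm]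
        omega
      have hr' : (r : ℝ) ≤ |((m₁ j - m₂ j : ℤ) : ℝ)| := by
        rw [← Int.cast_abs]
        exact_mod_cast hmj
      calc (r : ℝ) ≤ |((m₁ j - m₂ j : ℤ) : ℝ)| := hr'
        _ = Real.sqrt (((m₁ j - m₂ j : ℤ) : ℝ) ^ 2) := (Real.sqrt_sq_eq_abs _).symm
        _ ≤ Real.sqrt (∑ j, ((m₁ j - m₂ j : ℤ) : ℝ) ^ 2) := by
            apply Real.sqrt_le_sqrt
            exact Finset.single_le_sum (f := fun j => ((m₁ j - m₂ j : ℤ) : ℝ) ^ 2)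
              (fun j _ => sq_nonneg _) (Finset.mem_univ j)
    · -- meets the box of radius E
      obtain ⟨n, hn, hnU⟩ := hUsyn (act x (-(eps i)))
      have hc : n ∈ T i x := by
        rw [hT]
        simp only [Set.mem_setOf_eq]
        rw [hactadd] at hnU
        have : -eps i + n = n - eps i := by ring
        rwa [this] at hnU
      refine ⟨n, ⟨n, hc, fun j => by simp⟩, fun j => by simpa using hn j⟩
  · -- cover
    rw [Set.eq_univ_iff_forall]
    intro x
    obtain ⟨n, hn, hnU⟩ := hUsyn x
    set g : Fin d → Fin 3 := fun j =>
      if n j < -(2 * (r : ℤ)) then 2 else if (2 * (r : ℤ)) < n j then 0 else 1 with hg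
    set i : Fin (3 ^ d) := finFunctionFinEquiv g with hi
    have hgi : finFunctionFinEquiv.symm i = g := Equiv.symm_apply_apply _ _
    refine Set.mem_iUnion.mpr ⟨i, ?_⟩
    refine ⟨n + eps i, ?_, ?_⟩
    · rw [hT]
      simp only [Set.mem_setOf_eq]
      have : n + eps i - eps i = n := by ring
      rw [this]; exact hnU
    · intro j
      have hnj := hn j
      simp only [heps, hgi, Pi.add_apply]
      rw [hg]
      by_cases h1 : n j < -(2 * (r : ℤ))
      · simp only [h1, if_true]
        rw [show ((((2 : Fin 3)) : ℕ) : ℤ) = 2 from rfl,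
          show (4 : ℤ) * (r : ℤ) * ((2 : ℤ) - 1) = 4 * (r : ℤ) from by ring,
          abs_le]
        rw [abs_le] at hnj
        push_cast at hnj ⊢
        omega
      · by_cases h2 : (2 * (r : ℤ)) < n j
        · simp only [h1, h2, if_false, if_true]
          rw [show ((((0 : Fin 3)) : ℕ) : ℤ) = 0 from rfl,
            show (4 : ℤ) * (r : ℤ) * ((0 : ℤ) - 1) = -(4 * (r : ℤ)) from by ring,
            abs_le]
          rw [abs_le] at hnj
          push_cast at hnj ⊢
          omega
        · simp only [h1, h2, if_false]
          rw [show ((((1 : Fin 3)) : ℕ) : ℤ) = 1 from rfl,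
            show (4 : ℤ) * (r : ℤ) * ((1 : ℤ) - 1) = 0 from by ring,
            abs_le]
          rw [abs_le] at hnj
          push_cast at hnj ⊢
          omega
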